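/- Let h, k be coprime positive integers. For every point (x,y) ∈ ℂ² with (x,y) ≠ (0,0) and x^(h+k) = y^(hk), the fiber of F_{h,k} over (x,y), i.e. the set {(z,w) ∈ ℂ² : h·z^k + k·w^h = (h+k)·x and z·w = y}, is finite and has exactly h+k−1 elements (so F_{h,k} has simple branching over every smooth point of its branch curve). -/

import Mathlib

open Polynomial

namespace Stmt1Aux

noncomputable def P (h k : ℕ) (x y : ℂ) : ℂ[X] :=
  C (h:ℂ) * X ^ (h+k) - C (((h:ℂ)+(k:ℂ))*x) * X ^ h + C ((k:ℂ)*y^h)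

lemma evalP (h k : ℕ) (x y z : ℂ) :
    (P h k x y).eval z = (h:ℂ) * z^(h+k) - ((h:ℂ)+(k:ℂ))*x*z^h + (k:ℂ)*y^h := by
  simp [P]

lemma natDegP (h k : ℕ) (hh : 0 < h) (hk : 0 < k) (x y : ℂ) :
    (P h k x y).natDegree = h + k := by
  unfold P
  compute_degree!
  simp only [hh.ne', hk.ne', if_false, and_false, sub_zero, add_zero, if_neg]
  exact_mod_cast hh.ne'

lemma derivP (h k : ℕ) (x y : ℂ) :
    (P h k x y).derivative =
      C ((h:ℂ) * ((h+k : ℕ):ℂ)) * X ^ (h + k - 1) - C (((h:ℂ)+(k:ℂ))*x*((h:ℕ):ℂ)) * X ^ (h-1) := by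
  simp only [P, derivative_add, derivative_sub, derivative_C_mul_X_pow, derivative_C]
  push_cast
  ring

lemma evalDerivP (h k : ℕ) (x y z : ℂ) :
    ((P h k x y).derivative).eval z =
      (h:ℂ) * ((h+k : ℕ):ℂ) * z ^ (h + k - 1) - ((h:ℂ)+(k:ℂ))*x*(h:ℂ) * z ^ (h-1) := by
  rw [derivP]; push_cast; simp

lemma evalDeriv2P (h k : ℕ) (x y z : ℂ) :
    ((P h k x y).derivative.derivative).eval z =
      (h:ℂ) * ((h+k : ℕ):ℂ) * ((h+k-1 : ℕ):ℂ) * z ^ (h + k - 1 - 1)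
        - ((h:ℂ)+(k:ℂ))*x*(h:ℂ)*((h-1 : ℕ):ℂ) * z ^ (h-1-1) := by
  rw [derivP]
  simp [derivative_C_mul_X_pow, derivative_X_pow]
  ring


lemma uniq (h k : ℕ) (hk : 0 < k) (hcop : Nat.Coprime h k) (x : ℂ) (hx : x ≠ 0) {z1 z2 : ℂ}
    (h1k : z1 ^ k = x) (h2k : z2 ^ k = x) (h1h : x * z1 ^ h = x * z2 ^ h) : z1 = z2 := by
  have hz1 : z1 ≠ 0 := by rintro rfl; rw [zero_pow hk.ne'] at h1k; exact hx h1k.symm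
  have hz2 : z2 ≠ 0 := by rintro rfl; rw [zero_pow hk.ne'] at h2k; exact hx h2k.symm
  have htk : (z1/z2) ^ k = 1 := by rw [div_pow, h1k, h2k, div_self hx]
  have hth : (z1/z2) ^ h = 1 := by
    rw [div_pow, mul_left_cancel₀ hx h1h, div_self (pow_ne_zero _ hz2)]
  obtain ⟨a, b, hab⟩ : IsCoprime (h:ℤ) (k:ℤ) := by
    rw [Int.isCoprime_iff_gcd_eq_one, Int.gcd_natCast_natCast]; exact hcop
  have ht1 : z1/z2 = 1 := by
    calc z1/z2 = (z1/z2) ^ (a * (h:ℤ) + b * (k:ℤ)) := by rw [hab, zpow_one]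
    _ = 1 := by
      rw [zpow_add₀ (div_ne_zero hz1 hz2), mul_comm a (h:ℤ), mul_comm b (k:ℤ),
        zpow_mul, zpow_mul, zpow_natCast, zpow_natCast, hth, htk, one_zpow, one_zpow, one_mul]
  exact (div_eq_one_iff_eq hz2).mp ht1

lemma exists_z0 (h k : ℕ) (x y : ℂ) (hx : x ≠ 0) (hy : y ≠ 0)
    (hcop : Nat.Coprime h k) (hxy : x ^ (h + k) = y ^ (h * k)) :
    ∃ z0 : ℂ, z0 ^ k = x ∧ x * z0 ^ h = y ^ h := by
  obtain ⟨a, b, hab⟩ : IsCoprime ((k:ℤ)) ((h:ℤ)) := by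
    rw [Int.isCoprime_iff_gcd_eq_one, Int.gcd_natCast_natCast]; exact hcop.symm
  set v : ℂ := y ^ h / x with hv_def
  have hv : v ≠ 0 := div_ne_zero (pow_ne_zero _ hy) hx
  have hvk : v ^ k = x ^ h := by
    have h1 : (y ^ h) ^ k = x ^ (h + k) := by rw [← pow_mul, ← hxy]
    rw [div_pow, h1, pow_add, mul_div_cancel_right₀ _ (pow_ne_zero k hx)]
  have hvkz : v ^ (k:ℤ) = x ^ (h:ℤ) := by rw [zpow_natCast, zpow_natCast, hvk]
  refine ⟨x ^ a * v ^ b, ?_, ?_⟩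
  · have e1 : (x ^ a * v ^ b) ^ (k:ℤ) = x := by
      calc (x ^ a * v ^ b) ^ (k:ℤ)
          = x ^ (a * (k:ℤ)) * (v ^ (k:ℤ)) ^ b := by
            rw [mul_zpow, ← zpow_mul x a, ← zpow_mul v b, mul_comm b (k:ℤ), zpow_mul v (k:ℤ) b]
        _ = x ^ (a * (k:ℤ)) * x ^ ((h:ℤ) * b) := by rw [hvkz, ← zpow_mul]
        _ = x ^ (a * (k:ℤ) + (h:ℤ) * b) := (zpow_add₀ hx _ _).symm
        _ = x := by rw [show a * (k:ℤ) + (h:ℤ) * b = 1 by linarith, zpow_one]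
    rw [← zpow_natCast (x ^ a * v ^ b) k, e1]
  · have e2 : (x ^ a * v ^ b) ^ (h:ℤ) = v := by
      calc (x ^ a * v ^ b) ^ (h:ℤ)
          = (x ^ (h:ℤ)) ^ a * v ^ (b * (h:ℤ)) := by
            rw [mul_zpow, ← zpow_mul x a, mul_comm a (h:ℤ), zpow_mul x (h:ℤ) a, ← zpow_mul v b]
        _ = v ^ ((k:ℤ) * a) * v ^ (b * (h:ℤ)) := by rw [← hvkz, ← zpow_mul]
        _ = v ^ ((k:ℤ) * a + b * (h:ℤ)) := (zpow_add₀ hv _ _).symm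
        _ = v := by rw [show (k:ℤ) * a + b * (h:ℤ) = 1 by linarith, zpow_one]
    rw [← zpow_natCast (x ^ a * v ^ b) h, e2, hv_def, mul_div_cancel₀ _ hx]


lemma Pne (h k : ℕ) (hh : 0 < h) (hk : 0 < k) (x y : ℂ) : P h k x y ≠ 0 := by
  intro e
  have := natDegP h k hh hk x y
  rw [e, natDegree_zero] at this
  omega

lemma root_ne_zero (h k : ℕ) (hh : 0 < h) (hk : 0 < k) (x y : ℂ) (hy : y ≠ 0)
    {z : ℂ} (hz : (P h k x y).eval z = 0) : z ≠ 0 := by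
  rintro rfl
  rw [evalP, zero_pow (by omega : h + k ≠ 0), zero_pow hh.ne'] at hz
  have h2 : (k:ℂ) * y ^ h = 0 := by linear_combination hz
  exact mul_ne_zero (Nat.cast_ne_zero.mpr hk.ne') (pow_ne_zero _ hy) h2

lemma crit (h k : ℕ) (hh : 0 < h) (hk : 0 < k) (x y : ℂ) {z : ℂ} (hz0 : z ≠ 0)
    (hz : (P h k x y).eval z = 0) (hz' : ((P h k x y).derivative).eval z = 0) :
    z ^ k = x ∧ x * z ^ h = y ^ h := by
  rw [evalDerivP] at hz'
  rw [evalP] at hz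
  have hB : (h:ℂ) + (k:ℂ) ≠ 0 := by
    have : ((h + k : ℕ):ℂ) ≠ 0 := Nat.cast_ne_zero.2 (by omega)
    push_cast at this; exact this
  have hA : (h:ℂ) ≠ 0 := Nat.cast_ne_zero.2 hh.ne'
  have hkx : z ^ k = x := by
    have e : ((h:ℂ) * ((h:ℂ) + (k:ℂ))) * z ^ (h-1) * (z ^ k - x) = 0 := by
      rw [show h + k - 1 = (h-1) + k from by omega] at hz'
      push_cast at hz'
      linear_combination hz'
    rcases mul_eq_zero.mp e with e1 | e2
    · rcases mul_eq_zero.mp e1 with e3 | e4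
      · exact absurd e3 (mul_ne_zero hA hB)
      · exact absurd e4 (pow_ne_zero _ hz0)
    · exact sub_eq_zero.mp e2
  refine ⟨hkx, ?_⟩
  have h2 : (k:ℂ) * (y ^ h - x * z ^ h) = 0 := by
    linear_combination hz - (h:ℂ) * z ^ h * hkx
  have := (mul_eq_zero.mp h2).resolve_left (Nat.cast_ne_zero.mpr hk.ne')
  linear_combination -this

lemma root_of (h k : ℕ) (x y : ℂ) {z : ℂ} (h1 : z ^ k = x) (h2 : x * z ^ h = y ^ h) :
    (P h k x y).eval z = 0 := by
  rw [evalP]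
  linear_combination (h:ℂ) * z ^ h * h1 - (k:ℂ) * h2

lemma deriv_root_of (h k : ℕ) (hh : 0 < h) (x y : ℂ) {z : ℂ} (h1 : z ^ k = x) :
    ((P h k x y).derivative).eval z = 0 := by
  rw [evalDerivP, show h + k - 1 = (h-1) + k from by omega]
  push_cast
  linear_combination ((h:ℂ) * ((h:ℂ) + (k:ℂ)) * z ^ (h-1)) * h1

lemma deriv2_ne (h k : ℕ) (hh : 0 < h) (hk : 0 < k) (x y : ℂ) (hx : x ≠ 0)
    {z0 : ℂ} (hz0 : z0 ≠ 0) (hz0k : z0 ^ k = x) :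
    ((P h k x y).derivative.derivative).eval z0 ≠ 0 := by
  rw [evalDeriv2P]
  rcases Nat.lt_or_ge h 2 with h1 | h2
  · obtain rfl : h = 1 := by omega
    intro e
    rw [show 1 + k - 1 - 1 = k - 1 from by omega, show (1:ℕ) - 1 = 0 from rfl,
      show 1 + k - 1 = k from by omega] at e
    have e2 : ((1 + k : ℕ):ℂ) * ((k:ℕ):ℂ) * z0 ^ (k-1) = 0 := by
      push_cast at e ⊢
      linear_combination e
    have hA : ((1 + k : ℕ):ℂ) ≠ 0 := Nat.cast_ne_zero.2 (by omega)
    exact mul_ne_zero (mul_ne_zero hA (Nat.cast_ne_zero.2 hk.ne')) (pow_ne_zero _ hz0) e2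
  · intro e
    have hxz : x * z0 ^ (h-2) = z0 ^ (h+k-2) := by
      rw [← hz0k, ← pow_add]
      congr 1
      omega
    have key : ((h:ℂ) * ((h+k:ℕ):ℂ) * ((h+k-1:ℕ):ℂ)
        - ((h:ℂ) + (k:ℂ)) * (h:ℂ) * ((h-1:ℕ):ℂ)) * z0 ^ (h+k-2) = 0 := by
      rw [show h + k - 1 - 1 = h + k - 2 from by omega,
        show h - 1 - 1 = h - 2 from by omega] at e
      linear_combination e + ((h:ℂ) + (k:ℂ)) * (h:ℂ) * ((h-1:ℕ):ℂ) * hxz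
    have hD : ((h:ℂ) * ((h+k:ℕ):ℂ) * ((h+k-1:ℕ):ℂ)
        - ((h:ℂ) + (k:ℂ)) * (h:ℂ) * ((h-1:ℕ):ℂ)) = (h:ℂ) * ((h:ℂ) + (k:ℂ)) * (k:ℂ) := by
      rw [Nat.cast_sub (by omega : 1 ≤ h + k), Nat.cast_sub (by omega : 1 ≤ h)]
      push_cast
      ring
    rw [hD] at key
    have hB : (h:ℂ) + (k:ℂ) ≠ 0 := by
      have : ((h + k : ℕ):ℂ) ≠ 0 := Nat.cast_ne_zero.2 (by omega)
      push_cast at this; exact this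
    exact mul_ne_zero (mul_ne_zero (mul_ne_zero (Nat.cast_ne_zero.2 hh.ne') hB)
      (Nat.cast_ne_zero.2 hk.ne')) (pow_ne_zero _ hz0) key

lemma card_roots_toFinset (h k : ℕ) (hh : 0 < h) (hk : 0 < k) (hcop : Nat.Coprime h k)
    (x y : ℂ) (hx : x ≠ 0) (hy : y ≠ 0) (hxy : x ^ (h + k) = y ^ (h * k)) :
    (P h k x y).roots.toFinset.card = h + k - 1 := by
  obtain ⟨z0, hz0k, hz0h⟩ := exists_z0 h k x y hx hy hcop hxy
  have hz0 : z0 ≠ 0 := by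
    rintro rfl; rw [zero_pow hk.ne'] at hz0k; exact hx hz0k.symm
  have hPne : P h k x y ≠ 0 := Pne h k hh hk x y
  have hroot0 : (P h k x y).eval z0 = 0 := root_of h k x y hz0k hz0h
  have hderiv0 : ((P h k x y).derivative).eval z0 = 0 := deriv_root_of h k hh x y hz0k
  have hmult0 : (P h k x y).roots.count z0 = 2 := by
    rw [count_roots]
    have h1 : 1 < rootMultiplicity z0 (P h k x y) :=
      (one_lt_rootMultiplicity_iff_isRoot hPne).2 ⟨hroot0, hderiv0⟩
    have h2 : ¬ 2 < rootMultiplicity z0 (P h k x y) := by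
      rw [lt_rootMultiplicity_iff_isRoot_iterate_derivative hPne]
      push_neg
      refine ⟨2, le_refl 2, ?_⟩
      show ¬ (derivative^[2] (P h k x y)).eval z0 = 0
      rw [show derivative^[2] (P h k x y) = (P h k x y).derivative.derivative from rfl]
      exact deriv2_ne h k hh hk x y hx hz0 hz0k
    omega
  have hmult1 : ∀ z ∈ (P h k x y).roots.toFinset, z ≠ z0 →
      (P h k x y).roots.count z = 1 := by
    intro z hz hzne
    rw [Multiset.mem_toFinset, mem_roots hPne] at hz
    rw [count_roots]
    have hge : 0 < rootMultiplicity z (P h k x y) := (rootMultiplicity_pos hPne).2 hz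
    have hlt : ¬ 1 < rootMultiplicity z (P h k x y) := by
      rw [one_lt_rootMultiplicity_iff_isRoot hPne]
      rintro ⟨e1, e2⟩
      have hzz : z ≠ 0 := root_ne_zero h k hh hk x y hy e1
      obtain ⟨f1, f2⟩ := crit h k hh hk x y hzz e1 e2
      exact hzne (uniq h k hk hcop x hx f1 hz0k (f2.trans hz0h.symm))
    omega
  have hz0mem : z0 ∈ (P h k x y).roots.toFinset := by
    rw [Multiset.mem_toFinset, mem_roots hPne]; exact hroot0
  have hcardroots : (P h k x y).roots.card = h + k := by
    have hs := (splits_iff_card_roots (f := P h k x y)).1 (IsAlgClosed.splits _)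
    rw [natDegP h k hh hk x y] at hs
    exact hs
  have hsum := Multiset.toFinset_sum_count_eq (P h k x y).roots
  rw [← Finset.add_sum_erase _ _ hz0mem, hmult0] at hsum
  have hones : ∑ z ∈ ((P h k x y).roots.toFinset.erase z0), (P h k x y).roots.count z
      = ((P h k x y).roots.toFinset.erase z0).card := by
    rw [Finset.sum_congr rfl
      (fun z hz => hmult1 z (Finset.mem_of_mem_erase hz) (Finset.ne_of_mem_erase hz))]
    simp
  rw [hones, Finset.card_erase_of_mem hz0mem, hcardroots] at hsum
  have hpos : 0 < (P h k x y).roots.toFinset.card := Finset.card_pos.2 ⟨z0, hz0mem⟩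
  omega

end Stmt1Aux

/-- For coprime positive integers `h, k`, the fiber of the projection
`F_{h,k} : S_{h,k} → ℂ²` over a nonzero point `(x, y)` of the branch curve
`x^(h+k) = y^(hk)` is finite with exactly `h + k - 1` elements, i.e. `F_{h,k}`
has simple branching over every smooth point of its branch curve. -/
theorem stmt_1 (h k : ℕ) (hh : 0 < h) (hk : 0 < k) (hcop : Nat.Coprime h k)
    (x y : ℂ) (hne : (x, y) ≠ (0, 0)) (hxy : x ^ (h + k) = y ^ (h * k)) :
    {p : ℂ × ℂ | (h : ℂ) * p.1 ^ k + (k : ℂ) * p.2 ^ h = ((h : ℂ) + (k : ℂ)) * x ∧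
        p.1 * p.2 = y}.Finite ∧
    {p : ℂ × ℂ | (h : ℂ) * p.1 ^ k + (k : ℂ) * p.2 ^ h = ((h : ℂ) + (k : ℂ)) * x ∧
        p.1 * p.2 = y}.ncard = h + k - 1 := by
  open Stmt1Aux in
  have hx : x ≠ 0 := by
    rintro rfl
    rw [zero_pow (by omega : h + k ≠ 0)] at hxy
    have hy : y = 0 := pow_eq_zero_iff (by positivity : h * k ≠ 0) |>.mp hxy.symm
    exact hne (by rw [hy])
  have hy : y ≠ 0 := by
    rintro rfl
    rw [zero_pow (by positivity : h * k ≠ 0)] at hxy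
    exact hx (pow_eq_zero_iff (by omega : h + k ≠ 0) |>.mp hxy)
  have hPne : P h k x y ≠ 0 := Pne h k hh hk x y
  have hS : {p : ℂ × ℂ | (h : ℂ) * p.1 ^ k + (k : ℂ) * p.2 ^ h = ((h : ℂ) + (k : ℂ)) * x ∧
        p.1 * p.2 = y}
      = (fun z : ℂ => (z, y / z)) '' ((P h k x y).roots.toFinset : Set ℂ) := by
    ext ⟨z, w⟩
    simp only [Set.mem_setOf_eq, Set.mem_image, Finset.mem_coe, Multiset.mem_toFinset,
      Polynomial.mem_roots hPne, Polynomial.IsRoot.def, Prod.mk.injEq]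
    constructor
    · rintro ⟨hp1, hp2⟩
      have hz : z ≠ 0 := by rintro rfl; rw [zero_mul] at hp2; exact hy hp2.symm
      refine ⟨z, ?_, rfl, ?_⟩
      · rw [evalP, ← hp2]
        linear_combination z ^ h * hp1
      · rw [← hp2, mul_div_cancel_left₀ _ hz]
    · rintro ⟨z', heval, rfl, rfl⟩
      have hz : z' ≠ 0 := root_ne_zero h k hh hk x y hy heval
      rw [evalP] at heval
      refine ⟨?_, mul_div_cancel₀ _ hz⟩
      apply mul_right_cancel₀ (pow_ne_zero h hz)
      have hdiv : (y / z') ^ h * z' ^ h = y ^ h := by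
        rw [div_pow, div_mul_cancel₀ _ (pow_ne_zero _ hz)]
      rw [add_mul, mul_assoc (k:ℂ) _ _, hdiv]
      linear_combination heval
  have hinj : Set.InjOn (fun z : ℂ => (z, y / z))
      ((P h k x y).roots.toFinset : Set ℂ) :=
    fun a _ b _ e => congrArg Prod.fst e
  constructor
  · rw [hS]
    exact Set.Finite.image _ (Finset.finite_toSet _)
  · rw [hS, Set.ncard_image_of_injOn hinj, Set.ncard_coe_finset]
    exact card_roots_toFinset h k hh hk hcop x y hx hy hxy
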